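/- A function p : ℝ → ℝ satisfies both monotonicity (for all t₁, t₂, t₃ ∈ ℝ, |t₁ − t₂| > |t₁ − t₃| if and only if |p(t₁) − p(t₂)| > |p(t₁) − p(t₃)|) and translation invariance (for all t₁, t₂, l ∈ ℝ, |p(t₁ + l) − p(t₁)| = |p(t₂ + l) − p(t₂)|) if and only if there exist k, b ∈ ℝ with k ≠ 0 such that p(x) = k·x + b for all x ∈ ℝ. -/

import Mathlib

lemma aux_additive_monotone (q : ℝ → ℝ) (hadd : ∀ x y, q (x + y) = q x + q y)
    (hmono : Monotone q) (x : ℝ) : q x = q 1 * x := by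
  have hq0 : q 0 = 0 := by have := hadd 0 0; simp at this; linarith
  let Q : ℝ →+ ℝ := AddMonoidHom.mk' q hadd
  have hrat : ∀ r : ℚ, q (r : ℝ) = (r : ℝ) * q 1 := by
    intro r
    have := map_ratCast_smul Q ℝ ℝ r (1 : ℝ)
    simpa [Q, smul_eq_mul] using this
  have hk : 0 ≤ q 1 := by
    have := hmono (by norm_num : (0:ℝ) ≤ 1); rw [hq0] at this; exact this
  rcases eq_or_lt_of_le hk with h0 | hpos
  · -- q 1 = 0, show q x = 0
    obtain ⟨r, hr⟩ := exists_rat_gt x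
    obtain ⟨s, hs⟩ := exists_rat_lt x
    have h1 : q x ≤ 0 := by
      have := hmono hr.le; rw [hrat r, ← h0] at this; linarith
    have h2 : 0 ≤ q x := by
      have := hmono hs.le; rw [hrat s, ← h0] at this; linarith
    rw [← h0]; linarith
  · have hle : q x ≤ q 1 * x := by
      by_contra h
      push_neg at h
      have hx : x < q x / q 1 := (lt_div_iff₀ hpos).2 (by linarith [mul_comm (q 1) x])
      obtain ⟨r, hr1, hr2⟩ := exists_rat_btwn hx
      have := hmono hr1.le
      rw [hrat r] at this
      have : (r : ℝ) * q 1 < q x := (lt_div_iff₀ hpos).1 hr2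
      linarith [hmono hr1.le, hrat r]
    have hge : q 1 * x ≤ q x := by
      by_contra h
      push_neg at h
      have hx : q x / q 1 < x := (div_lt_iff₀ hpos).2 (by linarith [mul_comm (q 1) x])
      obtain ⟨r, hr1, hr2⟩ := exists_rat_btwn hx
      have h1 := hmono hr2.le
      rw [hrat r] at h1
      have h2 : q x < (r : ℝ) * q 1 := (div_lt_iff₀ hpos).1 hr1
      linarith
    linarith

theorem monotone_translation_invariant_iff_linear
    (p : ℝ → ℝ) :
    ((∀ t₁ t₂ t₃ : ℝ, |t₁ - t₂| > |t₁ - t₃| ↔ |p t₁ - p t₂| > |p t₁ - p t₃|) ∧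
      (∀ t₁ t₂ l : ℝ, |p (t₁ + l) - p t₁| = |p (t₂ + l) - p t₂|)) ↔
    (∃ k b : ℝ, k ≠ 0 ∧ ∀ x : ℝ, p x = k * x + b) := by
  constructor
  · rintro ⟨hm, -⟩
    -- equality version of hm
    have heq : ∀ t₁ t₂ t₃ : ℝ, |t₁ - t₂| = |t₁ - t₃| → |p t₁ - p t₂| = |p t₁ - p t₃| := by
      intro t₁ t₂ t₃ h
      have h1 : ¬ |p t₁ - p t₂| > |p t₁ - p t₃| := fun hgt => by
        have := (hm t₁ t₂ t₃).2 hgt; linarith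
      have h2 : ¬ |p t₁ - p t₃| > |p t₁ - p t₂| := fun hgt => by
        have := (hm t₁ t₃ t₂).2 hgt; linarith
      linarith [le_of_not_gt h1, le_of_not_gt h2]
    -- injectivity
    have hinj : ∀ a b : ℝ, p a = p b → a = b := by
      intro a b hab
      by_contra hne
      have h1 : |a - b| > |a - a| := by
        simp only [sub_self, abs_zero]
        exact abs_pos.2 (sub_ne_zero.2 hne)
      have := (hm a b a).1 h1
      rw [hab] at this
      simp at this
    -- midpoint property
    have hmid : ∀ a b : ℝ, p ((a + b) / 2) = (p a + p b) / 2 := by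
      intro a b
      set m := (a + b) / 2 with hm_def
      have hdist : |m - a| = |m - b| := by
        rw [abs_sub_comm m b]
        congr 1; ring
      have := heq m a b hdist
      rcases abs_eq_abs.1 this with h | h
      · have : p a = p b := by linarith
        have hab : a = b := hinj _ _ this
        subst hab
        have : m = a := by rw [hm_def]; ring
        rw [this]; linarith
      · linarith
    obtain ⟨q, hq_def⟩ : ∃ q : ℝ → ℝ, ∀ x, q x = p x - p 0 :=
      ⟨fun x => p x - p 0, fun _ => rfl⟩
    have hq0 : q 0 = 0 := by rw [hq_def]; ring
    have hqmid : ∀ a b : ℝ, q ((a + b) / 2) = (q a + q b) / 2 := by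
      intro a b; rw [hq_def, hq_def, hq_def, hmid]; ring
    have hhalf : ∀ a : ℝ, q (a / 2) = q a / 2 := by
      intro a
      have := hqmid a 0
      rw [hq0] at this
      simpa using this
    have hadd : ∀ x y : ℝ, q (x + y) = q x + q y := by
      intro x y
      have h1 := hqmid x y
      have h2 := hhalf (x + y)
      rw [h2] at h1
      linarith [h1, h2]
    -- abs comparison through 0
    have habs : ∀ a b : ℝ, |a| > |b| → |q a| > |q b| := by
      intro a b h
      have h2 := (hm 0 a b).1 (by simpa [abs_sub_comm] using h)
      rw [hq_def, hq_def, abs_sub_comm (p a), abs_sub_comm (p b)]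
      exact h2
    have hqne : ∀ x : ℝ, x ≠ 0 → q x ≠ 0 := by
      intro x hx h
      have : p x = p 0 := by simpa [hq_def, sub_eq_zero] using h
      exact hx (hinj _ _ this)
    -- same sign on positives
    have hsign : ∀ x : ℝ, 0 < x → 0 < q x * q 1 := by
      intro x hx
      rcases lt_or_gt_of_ne (hqne x (ne_of_gt hx)) with hqx | hqx <;>
      rcases lt_or_gt_of_ne (hqne 1 one_ne_zero) with hq1 | hq1
      · exact mul_pos_of_neg_of_neg hqx hq1
      · -- q x < 0 < q 1 : contradiction
        exfalso
        have h1 : |q (x + 1)| > |q x| := habs _ _ (by rw [abs_of_pos hx, abs_of_pos (by linarith)]; linarith)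
        have h2 : |q (x + 1)| > |q 1| := habs _ _ (by rw [abs_of_pos (by norm_num : (0:ℝ) < 1), abs_of_pos (by linarith)]; linarith)
        rw [hadd x 1] at h1 h2
        rcases le_or_gt 0 (q x + q 1) with h | h
        · rw [abs_of_nonneg h, abs_of_pos hq1] at h2; linarith
        · rw [abs_of_neg h, abs_of_neg hqx] at h1; linarith
      · -- q 1 < 0 < q x : contradiction, symmetric
        exfalso
        have h1 : |q (x + 1)| > |q x| := habs _ _ (by rw [abs_of_pos hx, abs_of_pos (by linarith)]; linarith)
        have h2 : |q (x + 1)| > |q 1| := habs _ _ (by rw [abs_of_pos (by norm_num : (0:ℝ) < 1), abs_of_pos (by linarith)]; linarith)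
        rw [hadd x 1] at h1 h2
        rcases le_or_gt 0 (q x + q 1) with h | h
        · rw [abs_of_nonneg h, abs_of_pos hqx] at h1; linarith
        · rw [abs_of_neg h, abs_of_neg hq1] at h2; linarith
      · exact mul_pos hqx hq1
    have hk := hqne 1 one_ne_zero
    rcases lt_or_gt_of_ne hk with hneg | hpos
    · -- q 1 < 0 : -q is monotone
      have hmono : Monotone (fun x => -q x) := by
        intro a b hab
        show -q a ≤ -q b
        rcases eq_or_lt_of_le hab with h | h
        · subst h; exact le_refl _
        · have h1 : 0 < q (b - a) * q 1 := hsign _ (by linarith)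
          have h2 : q (b - a) < 0 := by
            rcases lt_or_gt_of_ne (hqne (b - a) (by intro h'; linarith [sub_eq_zero.1 h'])) with h' | h'
            · exact h'
            · nlinarith
          have : q b = q a + q (b - a) := by
            have := hadd a (b - a); rw [show a + (b - a) = b by ring] at this; linarith
          linarith
      have hlin := fun z => aux_additive_monotone (fun x => -q x)
        (fun x y => by rw [hadd]; ring) hmono z
      refine ⟨q 1, p 0, hk, fun x => ?_⟩
      have h := hlin x
      have hqx : q x = q 1 * x := by
        have h2 : -q x = -q 1 * x := h
        linarith
      rw [hq_def x] at hqx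
      linarith
    · have hmono : Monotone q := by
        intro a b hab
        rcases eq_or_lt_of_le hab with h | h
        · subst h; exact le_refl _
        · have h1 : 0 < q (b - a) * q 1 := hsign _ (by linarith)
          have h2 : 0 < q (b - a) := by nlinarith
          have : q b = q a + q (b - a) := by
            have := hadd a (b - a); rw [show a + (b - a) = b by ring] at this; linarith
          linarith
      have hlin := aux_additive_monotone q hadd hmono
      refine ⟨q 1, p 0, hk, fun x => ?_⟩
      have h := hlin x
      rw [hq_def x] at h
      linarith
  · rintro ⟨k, b, hk, hp⟩
    constructor
    · intro t₁ t₂ t₃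
      simp only [hp]
      have h1 : k * t₁ + b - (k * t₂ + b) = k * (t₁ - t₂) := by ring
      have h2 : k * t₁ + b - (k * t₃ + b) = k * (t₁ - t₃) := by ring
      rw [h1, h2, abs_mul, abs_mul]
      constructor
      · intro h; exact mul_lt_mul_of_pos_left h (abs_pos.2 hk)
      · intro h; exact lt_of_mul_lt_mul_left h (abs_nonneg k)
    · intro t₁ t₂ l
      simp only [hp]
      have h1 : k * (t₁ + l) + b - (k * t₁ + b) = k * l := by ring
      have h2 : k * (t₂ + l) + b - (k * t₂ + b) = k * l := by ring
      rw [h1, h2]
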